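/- Let D₁, D₂, …, D_N be positive semidefinite operators on a finite-dimensional complex inner product space, and let s₁, …, s_N be N mutually orthogonal permutations of {1,…,N}, i.e. permutations such that for every k ≠ k' and every i one has s_k(i) ≠ s_{k'}(i). Then ‖Σ_{i=1}^N D_i‖ ≤ Σ_{k=1}^N max_{i ∈ {1,…,N}} ‖√(D_i) · √(D_{s_k(i)})‖, where √X denotes the positive semidefinite square root of X and ‖·‖ denotes the operator norm (Schatten ∞-norm, i.e. the largest singular value). -/

import Mathlib

open scoped InnerProductSpace
open Matrix ComplexOrder

/-- The positive semidefinite square root, as defined in Mathlib of December 2024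
(`Matrix.PosSemidef.sqrt`, since removed from Mathlib). -/
noncomputable def Matrix.PosSemidef.sqrt {n 𝕜 : Type*} [Fintype n] [DecidableEq n] [RCLike 𝕜]
    {A : Matrix n n 𝕜} (hA : A.PosSemidef) : Matrix n n 𝕜 :=
  hA.1.eigenvectorUnitary.1 * diagonal ((↑) ∘ Real.sqrt ∘ hA.1.eigenvalues) *
  (star hA.1.eigenvectorUnitary : Matrix n n 𝕜)

/-- The operator norm (Schatten ∞-norm, largest singular value) of a complex square
matrix, viewed as an operator on the Euclidean space `ℂ^d`. -/
noncomputable def opNorm {d : ℕ} (A : Matrix (Fin d) (Fin d) ℂ) : ℝ :=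
  ‖Matrix.toEuclideanCLM (𝕜 := ℂ) A‖

lemma Matrix.PosSemidef.sqrt_isHermitian' {n 𝕜 : Type*} [Fintype n] [DecidableEq n] [RCLike 𝕜]
    {A : Matrix n n 𝕜} (hA : A.PosSemidef) : (hA.sqrt).IsHermitian := by
  unfold Matrix.PosSemidef.sqrt IsHermitian
  simp [Matrix.conjTranspose_mul, Matrix.diagonal_conjTranspose, Matrix.mul_assoc, Matrix.star_eq_conjTranspose]
  congr 3
  funext i
  simp

lemma Matrix.PosSemidef.sqrt_mul_self' {n 𝕜 : Type*} [Fintype n] [DecidableEq n] [RCLike 𝕜]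
    {A : Matrix n n 𝕜} (hA : A.PosSemidef) : hA.sqrt * hA.sqrt = A := by
  unfold Matrix.PosSemidef.sqrt
  conv_rhs => rw [hA.1.spectral_theorem, Unitary.conjStarAlgAut_apply]
  have hU : (star hA.1.eigenvectorUnitary : Matrix n n 𝕜) * hA.1.eigenvectorUnitary.1 = 1 :=
    Unitary.coe_star_mul_self _
  have hDD : diagonal ((↑) ∘ Real.sqrt ∘ hA.1.eigenvalues) *
      diagonal ((↑) ∘ Real.sqrt ∘ hA.1.eigenvalues) =
      diagonal (RCLike.ofReal ∘ hA.1.eigenvalues : n → 𝕜) := by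
    rw [diagonal_mul_diagonal]
    congr 1
    funext i
    simp only [Function.comp_apply]
    rw [← RCLike.ofReal_mul, Real.mul_self_sqrt (hA.eigenvalues_nonneg i)]
  calc _ = hA.1.eigenvectorUnitary.1 * diagonal ((↑) ∘ Real.sqrt ∘ hA.1.eigenvalues) *
      ((star hA.1.eigenvectorUnitary : Matrix n n 𝕜) * hA.1.eigenvectorUnitary.1) *
      diagonal ((↑) ∘ Real.sqrt ∘ hA.1.eigenvalues) *
      (star hA.1.eigenvectorUnitary : Matrix n n 𝕜) := by simp only [Matrix.mul_assoc]
    _ = _ := by rw [hU, Matrix.mul_one, Matrix.mul_assoc _ (diagonal _) (diagonal _), hDD]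


private lemma key_block {d N : ℕ} [Nonempty (Fin N)]
    (f : Fin N → (EuclideanSpace ℂ (Fin d) →L[ℂ] EuclideanSpace ℂ (Fin d)))
    (π : Equiv.Perm (Fin N)) (Mk C : ℝ) (hMnn : 0 ≤ Mk) (hCnn : 0 ≤ C)
    (hfsa : ∀ i (x y : EuclideanSpace ℂ (Fin d)), ⟪f i x, y⟫_ℂ = ⟪x, f i y⟫_ℂ)
    (hquad : ∀ u : EuclideanSpace ℂ (Fin d), ∑ i, ‖f i u‖ ^ 2 ≤ C * ‖u‖ ^ 2)
    (hMk : ∀ i, ‖f i * f (π i)‖ ≤ Mk) :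
    ‖∑ i, f i * f i * (f (π i) * f (π i))‖ ≤ Mk * C := by
  set G : EuclideanSpace ℂ (Fin d) →L[ℂ] EuclideanSpace ℂ (Fin d) :=
    ∑ i, f i * f i * (f (π i) * f (π i)) with hG
  have hGinner : ∀ (u w : EuclideanSpace ℂ (Fin d)),
      ‖⟪u, G w⟫_ℂ‖ ≤ Mk * C * ‖u‖ * ‖w‖ := by
    intro u w
    have hterm : ∀ i, ‖⟪u, (f i * f i * (f (π i) * f (π i))) w⟫_ℂ‖
        ≤ Mk * (‖f i u‖ * ‖f (π i) w‖) := by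
      intro i
      have h1 : ⟪u, (f i * f i * (f (π i) * f (π i))) w⟫_ℂ
          = ⟪f i u, (f i * f (π i)) (f (π i) w)⟫_ℂ := by
        simp only [ContinuousLinearMap.mul_apply]
        rw [← hfsa i]
      rw [h1]
      calc ‖⟪f i u, (f i * f (π i)) (f (π i) w)⟫_ℂ‖
          ≤ ‖f i u‖ * ‖(f i * f (π i)) (f (π i) w)‖ := norm_inner_le_norm _ _
        _ ≤ ‖f i u‖ * (‖f i * f (π i)‖ * ‖f (π i) w‖) :=
            mul_le_mul_of_nonneg_left ((f i * f (π i)).le_opNorm _) (norm_nonneg _)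
        _ ≤ ‖f i u‖ * (Mk * ‖f (π i) w‖) := by
            refine mul_le_mul_of_nonneg_left ?_ (norm_nonneg _)
            exact mul_le_mul_of_nonneg_right (hMk i) (norm_nonneg _)
        _ = Mk * (‖f i u‖ * ‖f (π i) w‖) := by ring
    have hCS : ∑ i, ‖f i u‖ * ‖f (π i) w‖
        ≤ Real.sqrt (∑ i, ‖f i u‖ ^ 2) * Real.sqrt (∑ i, ‖f (π i) w‖ ^ 2) :=
      Real.sum_mul_le_sqrt_mul_sqrt _ _ _
    have hperm : ∑ i, ‖f (π i) w‖ ^ 2 = ∑ j, ‖f j w‖ ^ 2 :=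
      Equiv.sum_comp π (fun j => ‖f j w‖ ^ 2)
    have hs1 : Real.sqrt (∑ i, ‖f i u‖ ^ 2) ≤ Real.sqrt C * ‖u‖ := by
      have := Real.sqrt_le_sqrt (hquad u)
      rwa [Real.sqrt_mul hCnn, Real.sqrt_sq (norm_nonneg u)] at this
    have hs2 : Real.sqrt (∑ i, ‖f (π i) w‖ ^ 2) ≤ Real.sqrt C * ‖w‖ := by
      rw [hperm]
      have := Real.sqrt_le_sqrt (hquad w)
      rwa [Real.sqrt_mul hCnn, Real.sqrt_sq (norm_nonneg w)] at this
    calc ‖⟪u, G w⟫_ℂ‖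
        ≤ ∑ i, ‖⟪u, (f i * f i * (f (π i) * f (π i))) w⟫_ℂ‖ := by
          rw [hG]
          simp only [ContinuousLinearMap.sum_apply, inner_sum]
          exact norm_sum_le _ _
      _ ≤ ∑ i, Mk * (‖f i u‖ * ‖f (π i) w‖) := Finset.sum_le_sum fun i _ => hterm i
      _ = Mk * ∑ i, ‖f i u‖ * ‖f (π i) w‖ := by rw [Finset.mul_sum]
      _ ≤ Mk * (Real.sqrt (∑ i, ‖f i u‖ ^ 2) * Real.sqrt (∑ i, ‖f (π i) w‖ ^ 2)) :=
          mul_le_mul_of_nonneg_left hCS hMnn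
      _ ≤ Mk * ((Real.sqrt C * ‖u‖) * (Real.sqrt C * ‖w‖)) := by
          refine mul_le_mul_of_nonneg_left ?_ hMnn
          exact mul_le_mul hs1 hs2 (Real.sqrt_nonneg _)
            (mul_nonneg (Real.sqrt_nonneg _) (norm_nonneg _))
      _ = Mk * (Real.sqrt C * Real.sqrt C) * ‖u‖ * ‖w‖ := by ring
      _ = Mk * C * ‖u‖ * ‖w‖ := by rw [Real.mul_self_sqrt hCnn]
  refine ContinuousLinearMap.opNorm_le_bound _ (mul_nonneg hMnn hCnn) ?_
  intro w
  rcases eq_or_lt_of_le (norm_nonneg (G w)) with h0 | h0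
  · rw [← h0]
    exact mul_nonneg (mul_nonneg hMnn hCnn) (norm_nonneg w)
  · have hsq : ‖G w‖ ^ 2 ≤ Mk * C * ‖G w‖ * ‖w‖ := by
      calc ‖G w‖ ^ 2 = (⟪G w, G w⟫_ℂ).re := by
            exact_mod_cast (inner_self_eq_norm_sq (𝕜 := ℂ) (G w)).symm
        _ ≤ ‖⟪G w, G w⟫_ℂ‖ := Complex.re_le_norm _
        _ ≤ Mk * C * ‖G w‖ * ‖w‖ := hGinner (G w) w
    nlinarith [hsq, h0]

/-- Lemma 2 of Tomamichel–Fehr–Kaniewski–Wehner: if `D 1, …, D N` are positive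
semidefinite and `σ 1, …, σ N` are mutually orthogonal permutations of `{1,…,N}`,
then `‖Σ_i D i‖ ≤ Σ_k max_i ‖√(D i) √(D (σ k i))‖`. -/
theorem stmt3 {d N : ℕ} (hN : 0 < N)
    (D : Fin N → Matrix (Fin d) (Fin d) ℂ)
    (hD : ∀ i, (D i).PosSemidef)
    (σ : Fin N → Equiv.Perm (Fin N))
    (horth : ∀ k k', k ≠ k' → ∀ i, σ k i ≠ σ k' i) :
    opNorm (∑ i, D i) ≤ ∑ k, ⨆ i, opNorm ((hD i).sqrt * (hD (σ k i)).sqrt) := by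
  classical
  haveI : Nonempty (Fin N) := ⟨⟨0, hN⟩⟩
  set e := Matrix.toEuclideanCLM (𝕜 := ℂ) (n := Fin d) with he
  set f : Fin N → (EuclideanSpace ℂ (Fin d) →L[ℂ] EuclideanSpace ℂ (Fin d)) :=
    fun i => e ((hD i).sqrt) with hf
  set T := e (∑ i, D i) with hTdef
  set M : Fin N → ℝ := fun k => ⨆ i, opNorm ((hD i).sqrt * (hD (σ k i)).sqrt) with hM
  -- self-adjointness of f i
  have hfsa : ∀ i (x y : EuclideanSpace ℂ (Fin d)), ⟪f i x, y⟫_ℂ = ⟪x, f i y⟫_ℂ := by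
    intro i x y
    have hsa : _root_.IsSelfAdjoint (f i) := by
      rw [_root_.IsSelfAdjoint, hf, ← StarHomClass.map_star]
      exact congrArg e ((hD i).sqrt_isHermitian')
    rw [← ContinuousLinearMap.adjoint_inner_left, hsa.adjoint_eq]
  -- T as sum of squares
  have hTf : T = ∑ i, f i * f i := by
    rw [hTdef, _root_.map_sum]
    refine Finset.sum_congr rfl fun i _ => ?_
    rw [hf]
    rw [← _root_.map_mul, (hD i).sqrt_mul_self']
  -- M bounds
  have hMk : ∀ k i, ‖f i * f (σ k i)‖ ≤ M k := by
    intro k i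
    have hval : opNorm ((hD i).sqrt * (hD (σ k i)).sqrt) = ‖f i * f (σ k i)‖ := by
      rw [opNorm, _root_.map_mul]
    rw [hM, ← hval]
    exact le_ciSup (f := fun i => opNorm ((hD i).sqrt * (hD (σ k i)).sqrt)) (Finite.bddAbove_range _) i
  have hMnn : ∀ k, 0 ≤ M k := fun k =>
    le_trans (norm_nonneg _) (hMk k (Classical.arbitrary _))
  -- quadratic form bound
  have hquad : ∀ u : EuclideanSpace ℂ (Fin d), ∑ i, ‖f i u‖ ^ 2 ≤ ‖T‖ * ‖u‖ ^ 2 := by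
    intro u
    have h1 : (⟪u, T u⟫_ℂ).re = ∑ i, ‖f i u‖ ^ 2 := by
      rw [hTf]
      simp only [ContinuousLinearMap.sum_apply, inner_sum, ContinuousLinearMap.mul_apply]
      rw [Complex.re_sum]
      refine Finset.sum_congr rfl fun i _ => ?_
      rw [← hfsa i]
      exact_mod_cast inner_self_eq_norm_sq (𝕜 := ℂ) (f i u)
    calc ∑ i, ‖f i u‖ ^ 2 = (⟪u, T u⟫_ℂ).re := h1.symm
      _ ≤ ‖⟪u, T u⟫_ℂ‖ := Complex.re_le_norm _
      _ ≤ ‖u‖ * ‖T u‖ := norm_inner_le_norm _ _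
      _ ≤ ‖u‖ * (‖T‖ * ‖u‖) := by
          exact mul_le_mul_of_nonneg_left (T.le_opNorm u) (norm_nonneg u)
      _ = ‖T‖ * ‖u‖ ^ 2 := by ring
  -- the blocks
  set G : Fin N → (EuclideanSpace ℂ (Fin d) →L[ℂ] EuclideanSpace ℂ (Fin d)) :=
    fun k => ∑ i, f i * f i * (f (σ k i) * f (σ k i)) with hG
  -- T * T decomposes
  have hTT : T * T = ∑ k, G k := by
    rw [hTf]
    simp only [hG]
    rw [Finset.sum_mul_sum]
    rw [Finset.sum_comm (γ := Fin N) (s := Finset.univ) (t := Finset.univ)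
      (f := fun k i => f i * f i * (f (σ k i) * f (σ k i)))]
    refine Finset.sum_congr rfl fun i _ => ?_
    have hbij : Function.Bijective (fun k => σ k i) := by
      refine Finite.injective_iff_bijective.mp ?_
      intro k k' h
      by_contra hne
      exact horth k k' hne i h
    exact (Fintype.sum_bijective (fun k => σ k i) hbij
      (fun k => f i * f i * (f (σ k i) * f (σ k i)))
      (fun j => f i * f i * (f j * f j)) (fun k => rfl)).symm
  have hGnorm : ∀ k, ‖G k‖ ≤ M k * ‖T‖ := by
    intro k
    simp only [hG]
    exact key_block f (σ k) (M k) ‖T‖ (hMnn k) (norm_nonneg T) hfsa hquad (fun i => hMk k i)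
  -- finish
  have hTsa : _root_.IsSelfAdjoint T := by
    rw [_root_.IsSelfAdjoint, hTdef, ← StarHomClass.map_star]
    refine congrArg e ?_
    show star (∑ i, D i) = ∑ i, D i
    rw [star_sum]
    exact Finset.sum_congr rfl fun i _ => (hD i).1
  have hnormTT : ‖T * T‖ = ‖T‖ ^ 2 := by
    have := CStarRing.norm_star_mul_self (x := T)
    rw [hTsa.star_eq] at this
    rw [this, sq]
  have hfinal : ‖T‖ ^ 2 ≤ (∑ k, M k) * ‖T‖ := by
    calc ‖T‖ ^ 2 = ‖T * T‖ := hnormTT.symm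
      _ = ‖∑ k, G k‖ := by rw [hTT]
      _ ≤ ∑ k, ‖G k‖ := norm_sum_le _ _
      _ ≤ ∑ k, M k * ‖T‖ := Finset.sum_le_sum fun k _ => hGnorm k
      _ = (∑ k, M k) * ‖T‖ := by rw [Finset.sum_mul]
  have hgoal : ‖T‖ ≤ ∑ k, M k := by
    rcases eq_or_lt_of_le (norm_nonneg T) with h0 | h0
    · rw [← h0]
      exact Finset.sum_nonneg fun k _ => hMnn k
    · nlinarith [hfinal, h0]
  exact hgoal
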